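/- Let φ : Ω×M → ℝ be continuous and α ∈ ℝ. For every ω ∈ Ω with K_{φ,α}(ω) ≠ ∅, the fiber Bowen topological entropy satisfies h_top(F, K_{φ,α}(ω), ω) ≤ Λ_{φ,α}(ω), where Λ_{φ,α}(ω) := sup_{ε>0} inf_{δ>0} liminf_{n→∞} (1/n) log N(α,δ,n,ε,ω). -/

import Mathlib

open Set Filter Topology MeasureTheory ENNReal NNReal

noncomputable section

namespace Paper

variable {X : Type*}

/-- Generic Bowen ball for a family of dynamical distances. -/
def cBall (d : ℕ → X → X → ℝ) (n : ℕ) (x : X) (ε : ℝ) : Set X := {y | d n x y < ε}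

/-- `m(Z,s,N,ε)`: infimum over finite or countable covers by Bowen balls of order ≥ N
of `Σ e^{-s n_i}`. -/
def cM (d : ℕ → X → X → ℝ) (Z : Set X) (s : ℝ) (N : ℕ) (ε : ℝ) : ℝ≥0∞ :=
  ⨅ (C : Set (X × ℕ)) (_ : C.Countable) (_ : ∀ p ∈ C, N ≤ p.2)
    (_ : Z ⊆ ⋃ p ∈ C, cBall d p.2 p.1 ε),
    ∑' p : C, ENNReal.ofReal (Real.exp (-s * ((p : X × ℕ).2 : ℝ)))

/-- `m(Z,s,ε) = sup_N m(Z,s,N,ε) = lim_N m(Z,s,N,ε)`. -/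
def cMsup (d : ℕ → X → X → ℝ) (Z : Set X) (s : ℝ) (ε : ℝ) : ℝ≥0∞ :=
  ⨆ N : ℕ, cM d Z s N ε

/-- Bowen topological entropy at scale ε: the critical value of `s ↦ m(Z,s,ε)`. -/
def cHtopScale (d : ℕ → X → X → ℝ) (Z : Set X) (ε : ℝ) : ℝ≥0∞ :=
  ⨅ (s : ℝ) (_ : cMsup d Z s ε = 0), ENNReal.ofReal s

/-- Bowen topological entropy. -/
def cHtop (d : ℕ → X → X → ℝ) (Z : Set X) : ℝ≥0∞ :=
  ⨆ (ε : ℝ) (_ : 0 < ε), cHtopScale d Z ε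

variable {Ω M : Type*} [MetricSpace Ω] [MetricSpace M]

/-- Fiber forward iterates `F_ω^n = F_{θ^{n-1}ω} ∘ ⋯ ∘ F_ω`. -/
def fIter (θ : Ω → Ω) (F : Ω → M → M) (ω : Ω) : ℕ → M → M
  | 0 => id
  | n + 1 => F (θ^[n] ω) ∘ fIter θ F ω n

/-- Fiber Bowen metric `d_ω^n(x,y) = max_{0 ≤ i ≤ n-1} d_M(F_ω^i x, F_ω^i y)`. -/
def dBowen (θ : Ω → Ω) (F : Ω → M → M) (ω : Ω) (n : ℕ) (x y : M) : ℝ :=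
  ((Finset.range n).sup fun i => nndist (fIter θ F ω i x) (fIter θ F ω i y) : ℝ≥0)

/-- The skew product `Θ(ω,x) = (θω, F_ω x)`. -/
def skew (θ : Ω → Ω) (F : Ω → M → M) : Ω × M → Ω × M :=
  fun p => (θ p.1, F p.1 p.2)

/-- The deviation set `P(α,δ,n,ω)`. -/
def Pdev (θ : Ω → Ω) (F : Ω → M → M) (φ : Ω × M → ℝ) (α δ : ℝ) (n : ℕ) (ω : Ω) :
    Set M :=
  {x | |(∑ i ∈ Finset.range n, φ ((skew θ F)^[i] (ω, x))) / (n : ℝ) - α| < δ}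

/-- `N(α,δ,n,ε,ω)`: the minimal number of Bowen balls `B_n(ω,x,ε)` needed to cover
`P(α,δ,n,ω)`, with the convention `N = 1` when `P(α,δ,n,ω) = ∅`. -/
def coverMin (θ : Ω → Ω) (F : Ω → M → M) (φ : Ω × M → ℝ) (α δ : ℝ) (n : ℕ) (ε : ℝ)
    (ω : Ω) : ℕ :=
  max 1 (sInf {k : ℕ | ∃ E : Finset M, E.card = k ∧
    Pdev θ F φ α δ n ω ⊆ ⋃ x ∈ E, cBall (dBowen θ F ω) n x ε})

/-- The conditional level set of the Birkhoff average, `K_{φ,α}(ω)`. -/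
def KsetFiber (θ : Ω → Ω) (F : Ω → M → M) (φ : Ω × M → ℝ) (α : ℝ) (ω : Ω) : Set M :=
  {x | Tendsto (fun n : ℕ =>
    (∑ i ∈ Finset.range n, φ ((skew θ F)^[i] (ω, x))) / (n : ℝ)) atTop (𝓝 α)}

lemma continuous_fIter (θ : Ω → Ω) (F : Ω → M → M)
    (hF : Continuous fun p : Ω × M => F p.1 p.2) (ω : Ω) :
    ∀ n, Continuous (fIter θ F ω n) := by
  intro n
  induction n with
  | zero => exact continuous_id
  | succ n ih =>
    show Continuous (F (θ^[n] ω) ∘ fIter θ F ω n)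
    exact (hF.comp (continuous_const.prodMk continuous_id)).comp ih

lemma dBowen_self (θ : Ω → Ω) (F : Ω → M → M) (ω : Ω) (n : ℕ) (x : M) :
    dBowen θ F ω n x x = 0 := by
  have : ((Finset.range n).sup fun i => nndist (fIter θ F ω i x) (fIter θ F ω i x)) = 0 := by
    refine le_antisymm (Finset.sup_le fun i _ => by simp) zero_le
  simp [dBowen, this]

lemma isOpen_cBall (θ : Ω → Ω) (F : Ω → M → M)
    (hF : Continuous fun p : Ω × M => F p.1 p.2) (ω : Ω) (n : ℕ) (x : M)
    {ε : ℝ} (hε : 0 < ε) : IsOpen (cBall (dBowen θ F ω) n x ε) := by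
  have heq : cBall (dBowen θ F ω) n x ε =
      ⋂ i ∈ Finset.range n,
        {y : M | nndist (fIter θ F ω i x) (fIter θ F ω i y) < ε.toNNReal} := by
    ext y
    simp only [cBall, dBowen, Set.mem_setOf_eq, Set.mem_iInter]
    rw [show ε = ((ε.toNNReal : ℝ≥0) : ℝ) from (Real.coe_toNNReal ε hε.le).symm,
      NNReal.coe_lt_coe,
      Finset.sup_lt_iff (show (⊥ : ℝ≥0) < ε.toNNReal from Real.toNNReal_pos.2 hε)]
    simp only [Real.toNNReal_coe]
  rw [heq]
  exact isOpen_biInter_finset fun i _ =>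
    isOpen_lt (continuous_const.nndist ((continuous_fIter θ F hF ω i).comp continuous_id))
      continuous_const

lemma cover_exists [CompactSpace M] (θ : Ω → Ω) (F : Ω → M → M)
    (hF : Continuous fun p : Ω × M => F p.1 p.2) (ω : Ω) (Z : Set M) (n : ℕ)
    {ε : ℝ} (hε : 0 < ε) :
    ∃ E : Finset M, Z ⊆ ⋃ x ∈ E, cBall (dBowen θ F ω) n x ε := by
  obtain ⟨E, hE⟩ := IsCompact.elim_finite_subcover (isCompact_univ (X := M))
    (fun x : M => cBall (dBowen θ F ω) n x ε)
    (fun x => isOpen_cBall θ F hF ω n x hε)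
    (fun y _ => Set.mem_iUnion.2 ⟨y, by simp [cBall, dBowen_self, hε]⟩)
  exact ⟨E, (Z.subset_univ).trans hE⟩


/-- for every `ω` with `K_{φ,α}(ω) ≠ ∅`,
`h_top(F, K_{φ,α}(ω), ω) ≤ Λ_{φ,α}(ω) = sup_{ε>0} inf_{δ>0} liminf_n (1/n) log N(α,δ,n,ε,ω)`. -/
theorem entropy_level_set_le_Lambda
    [CompactSpace Ω] [CompactSpace M]
    (θ : Ω → Ω) (hθ : Continuous θ)
    (F : Ω → M → M) (hF : Continuous fun p : Ω × M => F p.1 p.2)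
    (φ : Ω × M → ℝ) (hφ : Continuous φ) (α : ℝ) (ω : Ω)
    (hK : (KsetFiber θ F φ α ω).Nonempty) :
    cHtop (dBowen θ F ω) (KsetFiber θ F φ α ω) ≤
      ⨆ (ε : ℝ) (_ : 0 < ε), ⨅ (δ : ℝ) (_ : 0 < δ),
        Filter.liminf (fun n : ℕ =>
          ENNReal.ofReal (Real.log (coverMin θ F φ α δ n ε ω) / (n : ℝ))) atTop := by
  refine iSup₂_le fun ε hε => ?_
  refine le_trans ?_ (le_iSup₂ (f := fun (ε : ℝ) (_ : 0 < ε) => ⨅ (δ : ℝ) (_ : 0 < δ),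
    Filter.liminf (fun n : ℕ =>
      ENNReal.ofReal (Real.log (coverMin θ F φ α δ n ε ω) / (n : ℝ))) atTop) ε hε)
  refine le_iInf₂ fun δ hδ => ?_
  set L := Filter.liminf (fun n : ℕ =>
      ENNReal.ofReal (Real.log (coverMin θ F φ α δ n ε ω) / (n : ℝ))) atTop with hLdef
  rcases eq_or_ne L ⊤ with hLtop | hLtop
  · rw [hLtop]; exact le_top
  refine ENNReal.le_of_forall_pos_le_add fun η hη _ => ?_
  have hηR : (0:ℝ) < (η:ℝ) := hη
  set t : ℝ := L.toReal + (η:ℝ)/2 with htdef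
  set s : ℝ := L.toReal + (η:ℝ) with hsdef
  have hLt : L < ENNReal.ofReal t := by
    rw [htdef, ENNReal.ofReal_add ENNReal.toReal_nonneg (by positivity),
      ENNReal.ofReal_toReal hLtop]
    exact ENNReal.lt_add_right hLtop (ENNReal.ofReal_pos.2 (by positivity)).ne'
  have hfreq : ∃ᶠ n in atTop,
      Real.log (coverMin θ F φ α δ n ε ω) / (n:ℝ) < t := by
    have hb : IsBoundedUnder (· ≥ ·) atTop (fun n : ℕ =>
        ENNReal.ofReal (Real.log (coverMin θ F φ α δ n ε ω) / (n : ℝ))) :=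
      ⟨0, Filter.Eventually.of_forall fun _ => zero_le⟩
    have h := Filter.frequently_lt_of_liminf_lt (f := atTop) (by isBoundedDefault) hLt
    refine h.mono fun n hn => ?_
    by_contra hcon
    exact absurd (ENNReal.ofReal_le_ofReal (not_lt.1 hcon)) (not_le.2 hn)
  have hKsub : ∀ x ∈ KsetFiber θ F φ α ω, ∃ N : ℕ, ∀ n ≥ N, x ∈ Pdev θ F φ α δ n ω := by
    intro x hx
    simp only [KsetFiber, Set.mem_setOf_eq] at hx
    obtain ⟨N, hN⟩ := (Metric.tendsto_atTop.1 hx) δ hδ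
    exact ⟨N, fun n hn => by
      simpa [Pdev, Set.mem_setOf_eq, Real.dist_eq] using hN n hn⟩
  have hzero : cMsup (dBowen θ F ω) (KsetFiber θ F φ α ω) s ε = 0 := by
    rw [← le_zero_iff]
    refine iSup_le fun N' => ?_
    refine ENNReal.le_of_forall_pos_le_add fun η' hη' _ => ?_
    rw [zero_add]
    have key : ∀ N : ℕ, ∃ n : ℕ, N ≤ n ∧ N' ≤ n ∧ ∃ E : Finset M,
        (Pdev θ F φ α δ n ω ⊆ ⋃ x ∈ E, cBall (dBowen θ F ω) n x ε) ∧
        ((E.card : ℝ≥0∞) * ENNReal.ofReal (Real.exp (-s * n)) ≤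
          (η' : ℝ≥0∞) * 2⁻¹ ^ (N+1)) := by
      intro N
      set r : ℝ := (η' : ℝ) * (2⁻¹ : ℝ) ^ (N+1) with hrdef
      have hη'R : (0:ℝ) < (η':ℝ) := hη'
      have hrpos : 0 < r := by positivity
      have hts : t - s < 0 := by rw [htdef, hsdef]; linarith
      have hlim : Tendsto (fun n : ℕ => Real.exp ((t - s) * n)) atTop (𝓝 0) := by
        have h1 : ∀ n : ℕ, Real.exp ((t-s) * n) = (Real.exp (t-s))^n := fun n => by
          rw [mul_comm, Real.exp_nat_mul]
        simp_rw [h1]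
        exact tendsto_pow_atTop_nhds_zero_of_lt_one (Real.exp_nonneg _)
          (Real.exp_lt_one_iff.2 hts)
      have hev : ∀ᶠ n : ℕ in atTop, Real.exp ((t - s) * n) < r :=
        hlim.eventually_lt_const hrpos
      obtain ⟨n, hlog, hnmax, hexp⟩ :=
        (hfreq.and_eventually ((eventually_ge_atTop (max N (max N' 1))).and hev)).exists
      have hnN : N ≤ n := le_trans (le_max_left _ _) hnmax
      have hnN' : N' ≤ n := le_trans ((le_max_left N' 1).trans (le_max_right _ _)) hnmax
      have hn1 : 1 ≤ n := le_trans ((le_max_right N' 1).trans (le_max_right _ _)) hnmax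
      have hnpos : (0:ℝ) < (n:ℝ) := by exact_mod_cast hn1
      obtain ⟨E0, hE0⟩ := cover_exists θ F hF ω (Pdev θ F φ α δ n ω) n hε
      have hSne : {k : ℕ | ∃ E : Finset M, E.card = k ∧
          Pdev θ F φ α δ n ω ⊆ ⋃ x ∈ E, cBall (dBowen θ F ω) n x ε}.Nonempty :=
        ⟨E0.card, E0, rfl, hE0⟩
      obtain ⟨E, hEcard, hEcov⟩ := Nat.sInf_mem hSne
      refine ⟨n, hnN, hnN', E, hEcov, ?_⟩
      have hcm1 : (1:ℕ) ≤ coverMin θ F φ α δ n ε ω := le_max_left _ _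
      have hcmpos : (0:ℝ) < (coverMin θ F φ α δ n ε ω : ℝ) := by exact_mod_cast hcm1
      have hlt : (coverMin θ F φ α δ n ε ω : ℝ) < Real.exp (t * n) :=
        (Real.log_lt_iff_lt_exp hcmpos).1 ((div_lt_iff₀ hnpos).1 hlog)
      have hcard_le : (E.card : ℝ) ≤ (coverMin θ F φ α δ n ε ω : ℝ) := by
        have : E.card ≤ coverMin θ F φ α δ n ε ω := hEcard ▸ le_max_right 1 _
        exact_mod_cast this
      calc (E.card : ℝ≥0∞) * ENNReal.ofReal (Real.exp (-s * n))
          = ENNReal.ofReal ((E.card : ℝ) * Real.exp (-s * n)) := by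
            rw [ENNReal.ofReal_mul (by positivity), ENNReal.ofReal_natCast]
        _ ≤ ENNReal.ofReal r := by
            apply ENNReal.ofReal_le_ofReal
            have h2 : (E.card:ℝ) * Real.exp (-s*n) ≤ Real.exp (t*n) * Real.exp (-s*n) :=
              mul_le_mul_of_nonneg_right (hcard_le.trans hlt.le) (Real.exp_nonneg _)
            refine h2.trans ?_
            rw [← Real.exp_add, show t * n + -s * n = (t - s) * n by ring]
            exact hexp.le
        _ = (η' : ℝ≥0∞) * 2⁻¹ ^ (N+1) := by
            rw [hrdef, ENNReal.ofReal_mul hη'R.le, ENNReal.ofReal_pow (by norm_num),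
              ENNReal.ofReal_coe_nnreal]
            congr 2
            rw [ENNReal.ofReal_inv_of_pos (by norm_num), ENNReal.ofReal_ofNat]
    choose nn hnn1 hnn2 EE hEEcov hEEbound using key
    set C : Set (M × ℕ) := ⋃ N : ℕ, (fun x : M => (x, nn N)) '' (EE N : Set M) with hCdef
    have hCc : C.Countable := countable_iUnion fun N => ((EE N).countable_toSet.image _)
    have hCord : ∀ p ∈ C, N' ≤ p.2 := by
      intro p hp
      simp only [hCdef, Set.mem_iUnion, Set.mem_image] at hp
      obtain ⟨N, x, hx, rfl⟩ := hp
      exact hnn2 N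
    have hCcov : KsetFiber θ F φ α ω ⊆ ⋃ p ∈ C, cBall (dBowen θ F ω) p.2 p.1 ε := by
      intro x hx
      obtain ⟨N, hN⟩ := hKsub x hx
      have hxP : x ∈ Pdev θ F φ α δ (nn N) ω := hN _ (hnn1 N)
      obtain ⟨y, hy, hball⟩ := Set.mem_iUnion₂.1 (hEEcov N hxP)
      refine Set.mem_iUnion₂.2 ⟨(y, nn N), ?_, hball⟩
      exact Set.mem_iUnion.2 ⟨N, ⟨y, hy, rfl⟩⟩
    have hstep : cM (dBowen θ F ω) (KsetFiber θ F φ α ω) s N' ε ≤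
        ∑' p : C, ENNReal.ofReal (Real.exp (-s * ((p : M × ℕ).2 : ℝ))) := by
      unfold cM
      exact iInf_le_of_le C (iInf_le_of_le hCc (iInf_le_of_le hCord (iInf_le _ hCcov)))
    refine hstep.trans ?_
    have hle1 : ∑' p : C, ENNReal.ofReal (Real.exp (-s * ((p : M × ℕ).2 : ℝ)))
        ≤ ∑' N : ℕ, ∑' p : ((fun x : M => (x, nn N)) '' (EE N : Set M)),
            ENNReal.ofReal (Real.exp (-s * (((p : M × ℕ)).2 : ℝ))) := by
      rw [hCdef]
      exact ENNReal.tsum_iUnion_le_tsum (fun q : M × ℕ => ENNReal.ofReal (Real.exp (-s * (q.2 : ℝ))))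
        (fun N => (fun x : M => (x, nn N)) '' (EE N : Set M))
    refine hle1.trans ?_
    have hinner : ∀ N : ℕ, ∑' p : ((fun x : M => (x, nn N)) '' (EE N : Set M)),
        ENNReal.ofReal (Real.exp (-s * (((p : M × ℕ)).2 : ℝ)))
        ≤ ((EE N).card : ℝ≥0∞) * ENNReal.ofReal (Real.exp (-s * (nn N : ℝ))) := by
      intro N
      have hsurj : Function.Surjective (fun x : (EE N : Set M) =>
          (⟨(x.1, nn N), ⟨x.1, x.2, rfl⟩⟩ :
            ((fun x : M => (x, nn N)) '' (EE N : Set M)))) := by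
        rintro ⟨p, y, hy, rfl⟩
        exact ⟨⟨y, hy⟩, rfl⟩
      refine le_trans (ENNReal.tsum_le_tsum_comp_of_surjective hsurj
        (fun p : ((fun x : M => (x, nn N)) '' (EE N : Set M)) =>
          ENNReal.ofReal (Real.exp (-s * (((p : M × ℕ)).2 : ℝ))))) ?_
      have : ∑' x : (EE N : Set M), ENNReal.ofReal (Real.exp (-s * (nn N : ℝ)))
          = ((EE N).card : ℝ≥0∞) * ENNReal.ofReal (Real.exp (-s * (nn N : ℝ))) := by
        rw [Finset.tsum_subtype' (EE N) (fun _ => ENNReal.ofReal (Real.exp (-s * (nn N : ℝ)))),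
          Finset.sum_const, nsmul_eq_mul]
      exact le_of_eq this
    calc ∑' N : ℕ, ∑' p : ((fun x : M => (x, nn N)) '' (EE N : Set M)),
            ENNReal.ofReal (Real.exp (-s * (((p : M × ℕ)).2 : ℝ)))
        ≤ ∑' N : ℕ, (η' : ℝ≥0∞) * 2⁻¹ ^ (N+1) :=
          ENNReal.tsum_le_tsum fun N => (hinner N).trans (hEEbound N)
      _ = (η' : ℝ≥0∞) := by
          rw [ENNReal.tsum_mul_left]
          have hgeo : ∑' N : ℕ, (2⁻¹:ℝ≥0∞)^(N+1) = 1 := by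
            simp_rw [pow_succ]
            rw [ENNReal.tsum_mul_right, ENNReal.tsum_geometric]
            rw [ENNReal.one_sub_inv_two, inv_inv]
            exact ENNReal.mul_inv_cancel (by norm_num) (by norm_num)
          rw [hgeo, mul_one]
  have hfin : cHtopScale (dBowen θ F ω) (KsetFiber θ F φ α ω) ε ≤ ENNReal.ofReal s := by
    unfold cHtopScale
    exact iInf₂_le s hzero
  refine hfin.trans ?_
  rw [hsdef, ENNReal.ofReal_add ENNReal.toReal_nonneg hηR.le,
    ENNReal.ofReal_toReal hLtop, ENNReal.ofReal_coe_nnreal]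

end Paper
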